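/- arXiv:1611.00448 — 2 statements merged into one kernel-verified Lean document; each statement's English description precedes it below -/
import Mathlib

section
/- Let μ ∈ ℝ, σ > 0, ζ > 0, and let a, b ∈ ℝ be arbitrary constants. Then the convolution of the probit function with a Gaussian density satisfies the closed-form identity ∫_{−∞}^{∞} Φ(ζ·a·(x + b)) · N(x | μ, σ²) dx = Φ( ζ·a·(μ + b) / √(1 + ζ²·a²·σ²) ), where N(x | μ, σ²) = (2πσ²)^{−1/2}·exp(−(x−μ)²/(2σ²)) and Φ is the standard normal cumulative distribution function. -/
open MeasureTheory Real

/-- The Gaussian density with mean `μ` and variance `s`. -/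
noncomputable def gaussPDF (μ s x : ℝ) : ℝ :=
  (2 * Real.pi * s) ^ (-(1 : ℝ) / 2) * Real.exp (-(x - μ) ^ 2 / (2 * s))

/-- The standard normal cumulative distribution function. -/
noncomputable def stdNormalCDF (x : ℝ) : ℝ := ∫ θ in Set.Iic x, gaussPDF 0 1 θ

open ProbabilityTheory Set NNReal ENNReal

lemma gaussPDF_eq (m : ℝ) {s : ℝ} (hs : 0 ≤ s) (x : ℝ) :
    gaussPDF m s x = (Real.sqrt (2 * π * s))⁻¹ * Real.exp (-(x - m) ^ 2 / (2 * s)) := by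
  rw [gaussPDF, Real.sqrt_eq_rpow, ← Real.rpow_neg (by positivity)]
  norm_num

lemma gaussPDF_nonneg (m : ℝ) {s : ℝ} (hs : 0 ≤ s) (x : ℝ) : 0 ≤ gaussPDF m s x := by
  rw [gaussPDF_eq m hs]
  positivity

lemma gaussPDF_eq_pdfReal (m : ℝ) (v : ℝ≥0) (x : ℝ) :
    gaussPDF m (v : ℝ) x = gaussianPDFReal m v x := by
  rw [gaussPDF_eq m v.coe_nonneg, gaussianPDFReal]

lemma integrable_gaussPDF (m : ℝ) {s : ℝ} (hs : 0 < s) : Integrable (gaussPDF m s) := by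
  have h : gaussPDF m s = gaussianPDFReal m ⟨s, hs.le⟩ :=
    funext fun x => gaussPDF_eq_pdfReal m ⟨s, hs.le⟩ x
  rw [h]; exact integrable_gaussianPDFReal _ _

lemma integral_gaussPDF (m : ℝ) {s : ℝ} (hs : 0 < s) : ∫ x, gaussPDF m s x = 1 := by
  have h : gaussPDF m s = gaussianPDFReal m ⟨s, hs.le⟩ :=
    funext fun x => gaussPDF_eq_pdfReal m ⟨s, hs.le⟩ x
  rw [h]
  exact integral_gaussianPDFReal_eq_one m (fun h => hs.ne' (congrArg NNReal.toReal h))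

-- continuing
lemma stdNormalCDF_nonneg (x : ℝ) : 0 ≤ stdNormalCDF x :=
  setIntegral_nonneg measurableSet_Iic fun θ _ => gaussPDF_nonneg 0 one_pos.le θ

lemma stdNormalCDF_le_one (x : ℝ) : stdNormalCDF x ≤ 1 := by
  rw [stdNormalCDF]
  calc ∫ θ in Set.Iic x, gaussPDF 0 1 θ ≤ ∫ θ, gaussPDF 0 1 θ :=
        setIntegral_le_integral (integrable_gaussPDF 0 one_pos)
          (ae_of_all _ fun θ => gaussPDF_nonneg 0 one_pos.le θ)
    _ = 1 := integral_gaussPDF 0 one_pos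

lemma stdNormalCDF_mono : Monotone stdNormalCDF := fun s t hst =>
  setIntegral_mono_set (integrable_gaussPDF 0 one_pos).integrableOn
    (ae_of_all _ fun θ => gaussPDF_nonneg 0 one_pos.le θ)
    (HasSubset.Subset.eventuallyLE (Set.Iic_subset_Iic.2 hst))

lemma measurable_stdNormalCDF : Measurable stdNormalCDF :=
  stdNormalCDF_mono.measurable

lemma stdNormalCDF_eq_measure (x : ℝ) :
    stdNormalCDF x = ((gaussianReal 0 1) (Set.Iic x)).toReal := by
  rw [gaussianReal_apply_eq_integral 0 one_ne_zero,
    ENNReal.toReal_ofReal (setIntegral_nonneg measurableSet_Iic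
      fun θ _ => gaussianPDFReal_nonneg 0 1 θ), stdNormalCDF]
  congr 1
  ext θ
  simpa using gaussPDF_eq_pdfReal 0 1 θ

lemma integral_Iic_gaussPDF {V : ℝ} (hV : 0 < V) (m t : ℝ) :
    ∫ θ in Set.Iic t, gaussPDF m V θ = stdNormalCDF ((t - m) / Real.sqrt V) := by
  set v : ℝ≥0 := ⟨V, hV.le⟩ with hv_def
  have hv : v ≠ 0 := by
    intro h
    exact hV.ne' (congrArg NNReal.toReal h)
  have hsV : (0:ℝ) < Real.sqrt V := Real.sqrt_pos.2 hV
  have hmap : gaussianReal m v = (gaussianReal 0 1).map (fun x => Real.sqrt V * x + m) := by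
    have h1 : (gaussianReal 0 1).map (fun x => Real.sqrt V * x) = gaussianReal 0 v := by
      rw [show (fun x => Real.sqrt V * x) = (Real.sqrt V * ·) from rfl,
        gaussianReal_map_const_mul]
      congr 1
      · ring
      · ext
        simp [Real.sq_sqrt hV.le, hv_def]
        rfl
    have h2 : (fun x => Real.sqrt V * x + m) = (· + m) ∘ (fun x => Real.sqrt V * x) := rfl
    rw [h2, ← Measure.map_map (by fun_prop) (by fun_prop), h1,
      gaussianReal_map_add_const, zero_add]
  have hpre : (fun x => Real.sqrt V * x + m) ⁻¹' Set.Iic t = Set.Iic ((t - m) / Real.sqrt V) := by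
    ext u
    simp only [Set.mem_preimage, Set.mem_Iic]
    rw [le_div_iff₀ hsV, mul_comm]
    constructor <;> intro h <;> linarith
  have hL : ∫ θ in Set.Iic t, gaussPDF m V θ = ((gaussianReal m v) (Set.Iic t)).toReal := by
    rw [gaussianReal_apply_eq_integral m hv,
      ENNReal.toReal_ofReal (setIntegral_nonneg measurableSet_Iic
        fun θ _ => gaussianPDFReal_nonneg m v θ)]
    congr 1
    ext θ
    exact gaussPDF_eq_pdfReal m v θ
  rw [hL, hmap, Measure.map_apply (by fun_prop) measurableSet_Iic, hpre,
    stdNormalCDF_eq_measure]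

lemma shift_cdf (t : ℝ) :
    ∫ θ in Set.Iic (0:ℝ), gaussPDF 0 1 (θ + t) = stdNormalCDF t := by
  have h : ∀ θ : ℝ, gaussPDF 0 1 (θ + t) = gaussPDF (-t) 1 θ := by
    intro θ
    simp only [gaussPDF]
    ring_nf
  simp_rw [h]
  rw [integral_Iic_gaussPDF one_pos]
  norm_num

lemma gauss_product {v1 v2 : ℝ} (h1 : 0 < v1) (h2 : 0 < v2) (m1 m2 : ℝ) :
    ∫ x, gaussPDF m1 v1 x * gaussPDF m2 v2 x = gaussPDF m2 (v1 + v2) m1 := by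
  have hV : 0 < v1 + v2 := by linarith
  have hvs : 0 < v1 * v2 / (v1 + v2) := by positivity
  set ms := (m1 * v2 + m2 * v1) / (v1 + v2) with hms
  have key : ∀ x, gaussPDF m1 v1 x * gaussPDF m2 v2 x
      = gaussPDF m2 (v1 + v2) m1 * gaussPDF ms (v1 * v2 / (v1 + v2)) x := by
    intro x
    rw [gaussPDF_eq _ h1.le, gaussPDF_eq _ h2.le, gaussPDF_eq _ hV.le, gaussPDF_eq _ hvs.le,
      mul_mul_mul_comm, mul_mul_mul_comm ((Real.sqrt (2 * π * (v1 + v2)))⁻¹),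
      ← mul_inv, ← mul_inv, ← Real.exp_add, ← Real.exp_add,
      ← Real.sqrt_mul (by positivity), ← Real.sqrt_mul (by positivity)]
    have hVne : v1 + v2 ≠ 0 := hV.ne'
    congr 2
    · field_simp
    · rw [hms]
      field_simp
      ring
  simp_rw [key]
  rw [MeasureTheory.integral_const_mul, integral_gaussPDF _ hvs, mul_one]

lemma inner_eq {c σ : ℝ} (hc : c ≠ 0) (hσ : 0 < σ) (b μ θ : ℝ) :
    ∫ x, gaussPDF 0 1 (θ + c * (x + b)) * gaussPDF μ (σ ^ 2) x
      = gaussPDF (-(c * (μ + b))) (1 + c ^ 2 * σ ^ 2) θ := by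
  have hc2 : (0:ℝ) < c ^ 2 := by positivity
  have hinv : (0:ℝ) < 1 / c ^ 2 := by positivity
  have hσ2 : (0:ℝ) < σ ^ 2 := by positivity
  set m0 := (-θ - c * b) / c with hm0
  have step1 : ∀ x, gaussPDF 0 1 (θ + c * (x + b))
      = |c|⁻¹ * gaussPDF m0 (1 / c ^ 2) x := by
    intro x
    rw [gaussPDF_eq _ one_pos.le, gaussPDF_eq _ hinv.le, ← mul_assoc, ← Real.sqrt_sq_eq_abs,
      ← mul_inv, ← Real.sqrt_mul (sq_nonneg c)]
    congr 2
    · field_simp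
    · rw [hm0]
      field_simp
      ring
  simp_rw [step1, mul_assoc]
  rw [MeasureTheory.integral_const_mul, gauss_product hinv hσ2 m0 μ]
  rw [gaussPDF_eq _ (by positivity : (0:ℝ) ≤ 1 / c ^ 2 + σ ^ 2),
    gaussPDF_eq _ (by positivity : (0:ℝ) ≤ 1 + c ^ 2 * σ ^ 2), ← mul_assoc,
    ← Real.sqrt_sq_eq_abs, ← mul_inv, ← Real.sqrt_mul (sq_nonneg c)]
  congr 2
  · field_simp
  · rw [hm0]
    field_simp
    ring

lemma continuous_gaussPDF (m s : ℝ) : Continuous (gaussPDF m s) := by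
  unfold gaussPDF
  fun_prop


set_option maxHeartbeats 1000000 in
/-- convolution of the probit function with a Gaussian density:
`∫ Φ(ζ·a·(x+b))·N(x|μ,σ²) dx = Φ(ζ·a·(μ+b)/√(1+ζ²·a²·σ²))`. -/
theorem stmt_2 (μ σ ζ : ℝ) (hσ : 0 < σ) (hζ : 0 < ζ) (a b : ℝ) :
    ∫ x, stdNormalCDF (ζ * a * (x + b)) * gaussPDF μ (σ ^ 2) x
      = stdNormalCDF (ζ * a * (μ + b) / Real.sqrt (1 + ζ ^ 2 * a ^ 2 * σ ^ 2)) := by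
  set c := ζ * a with hc_def
  have hσ2 : (0:ℝ) < σ ^ 2 := by positivity
  by_cases hc : c = 0
  · have ha : a = 0 := by
      rcases mul_eq_zero.1 hc with h | h
      · exact absurd h hζ.ne'
      · exact h
    simp only [← hc_def, hc, ha, zero_mul, zero_div]
    rw [MeasureTheory.integral_const_mul, integral_gaussPDF μ hσ2, mul_one]
  · have hV : (0:ℝ) < 1 + c ^ 2 * σ ^ 2 := by positivity
    have hg : Integrable (gaussPDF μ (σ ^ 2)) := integrable_gaussPDF μ hσ2
    have hmain : Integrable (fun x => stdNormalCDF (c * (x + b)) * gaussPDF μ (σ ^ 2) x) := by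
      refine hg.bdd_mul (c := 1) ?_ (ae_of_all _ fun x => ?_)
      · exact (measurable_stdNormalCDF.comp (by fun_prop)).aestronglyMeasurable
      · rw [Real.norm_eq_abs, abs_of_nonneg (stdNormalCDF_nonneg _)]
        exact stdNormalCDF_le_one _
    have hptwise : ∀ x, stdNormalCDF (c * (x + b)) * gaussPDF μ (σ ^ 2) x
        = ∫ θ in Set.Iic (0:ℝ), gaussPDF 0 1 (θ + c * (x + b)) * gaussPDF μ (σ ^ 2) x := by
      intro x
      rw [← shift_cdf (c * (x + b)), MeasureTheory.integral_mul_const]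
    have hFmeas : AEStronglyMeasurable
        (Function.uncurry fun x θ => gaussPDF 0 1 (θ + c * (x + b)) * gaussPDF μ (σ ^ 2) x)
        (MeasureTheory.Measure.prod volume (volume.restrict (Set.Iic (0:ℝ)))) := by
      apply Continuous.aestronglyMeasurable
      apply Continuous.mul
      · exact (continuous_gaussPDF 0 1).comp (by fun_prop)
      · exact (continuous_gaussPDF μ (σ ^ 2)).comp continuous_fst
    have hFint : Integrable
        (Function.uncurry fun x θ => gaussPDF 0 1 (θ + c * (x + b)) * gaussPDF μ (σ ^ 2) x)
        (MeasureTheory.Measure.prod volume (volume.restrict (Set.Iic (0:ℝ)))) := by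
      rw [MeasureTheory.integrable_prod_iff hFmeas]
      simp only [Function.uncurry_apply_pair]
      constructor
      · refine ae_of_all _ fun x => ?_
        exact (((integrable_gaussPDF 0 one_pos).comp_add_right
          (c * (x + b))).restrict.mul_const _)
      · have heq : (fun x => ∫ θ in Set.Iic (0:ℝ),
            ‖gaussPDF 0 1 (θ + c * (x + b)) * gaussPDF μ (σ ^ 2) x‖)
            = fun x => stdNormalCDF (c * (x + b)) * gaussPDF μ (σ ^ 2) x := by
          funext x
          have : ∀ θ : ℝ, ‖gaussPDF 0 1 (θ + c * (x + b)) * gaussPDF μ (σ ^ 2) x‖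
              = gaussPDF 0 1 (θ + c * (x + b)) * gaussPDF μ (σ ^ 2) x := fun θ => by
            rw [Real.norm_eq_abs, abs_of_nonneg
              (mul_nonneg (gaussPDF_nonneg 0 one_pos.le _) (gaussPDF_nonneg μ hσ2.le _))]
          simp_rw [this]
          exact (hptwise x).symm
        rw [heq]
        exact hmain
    calc ∫ x, stdNormalCDF (c * (x + b)) * gaussPDF μ (σ ^ 2) x
        = ∫ x, ∫ θ in Set.Iic (0:ℝ),
            gaussPDF 0 1 (θ + c * (x + b)) * gaussPDF μ (σ ^ 2) x := by
          simp_rw [hptwise]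
      _ = ∫ θ in Set.Iic (0:ℝ), ∫ x,
            gaussPDF 0 1 (θ + c * (x + b)) * gaussPDF μ (σ ^ 2) x := by
          exact MeasureTheory.integral_integral_swap hFint
      _ = ∫ θ in Set.Iic (0:ℝ), gaussPDF (-(c * (μ + b))) (1 + c ^ 2 * σ ^ 2) θ := by
          apply MeasureTheory.setIntegral_congr_fun measurableSet_Iic
          intro θ _
          exact inner_eq hc hσ b μ θ
      _ = stdNormalCDF ((0 - -(c * (μ + b))) / Real.sqrt (1 + c ^ 2 * σ ^ 2)) :=
          integral_Iic_gaussPDF hV _ 0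
      _ = stdNormalCDF (ζ * a * (μ + b) / Real.sqrt (1 + ζ ^ 2 * a ^ 2 * σ ^ 2)) := by
          rw [show (1 : ℝ) + c ^ 2 * σ ^ 2 = 1 + ζ ^ 2 * a ^ 2 * σ ^ 2 from by
            rw [hc_def]; ring]
          norm_num
          rw [hc_def]
end

section
/- Let c ∈ ℝ and d > 0, and let Z be a Gaussian random variable with mean c and variance d. Then the second moment of the rectified variable max(0, Z) is given in closed form by E[max(0, Z)²] = ∫ N(x | c, d)·max(0, x)² dx = Φ(c/√d)·(c² + d) + c·√d·φ(c/√d), where Φ is the standard normal cumulative distribution function and φ(x) = N(x | 0, 1) is the standard normal density. -/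
open MeasureTheory Real

open Filter Set Topology

private lemma int_pow_gauss {b : ℝ} (hb : 0 < b) (n : ℕ) :
    Integrable (fun x : ℝ => x ^ n * Real.exp (-b * x ^ 2)) := by
  have := integrable_rpow_mul_exp_neg_mul_sq hb (s := (n : ℝ))
    (lt_of_lt_of_le neg_one_lt_zero (Nat.cast_nonneg n))
  simpa [Real.rpow_natCast] using this

private lemma integral_comp_sub_right_Ioi (f : ℝ → ℝ) (a c : ℝ) :
    ∫ x in Ioi a, f (x - c) = ∫ x in Ioi (a - c), f x := by
  have hmp : MeasurePreserving (fun x : ℝ => x - c) volume volume :=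
    measurePreserving_sub_right volume c
  have hemb : MeasurableEmbedding (fun x : ℝ => x - c) :=
    (Homeomorph.subRight c).isClosedEmbedding.measurableEmbedding
  have := hmp.setIntegral_preimage_emb hemb f (Ioi (a - c))
  rw [← this]
  congr 1
  ext x
  simp [sub_lt_sub_iff_right]

/-- for `Z ~ N(c, d)`, the second moment of `max(0, Z)` is
`Φ(c/√d)·(c² + d) + c·√d·φ(c/√d)`, where `φ` is the standard normal density. -/
theorem stmt_14 (c d : ℝ) (hd : 0 < d) :
    ∫ x, gaussPDF c d x * (max 0 x) ^ 2
      = stdNormalCDF (c / Real.sqrt d) * (c ^ 2 + d)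
          + c * Real.sqrt d * gaussPDF 0 1 (c / Real.sqrt d) := by
  set s := Real.sqrt d with hsdef
  have hs0 : 0 < s := Real.sqrt_pos.mpr hd
  have hs2 : s ^ 2 = d := Real.sq_sqrt hd.le
  have hb : (0 : ℝ) < (2 * d)⁻¹ := by positivity
  set b : ℝ := (2 * d)⁻¹ with hbdef
  set K : ℝ := (2 * Real.pi * d) ^ (-(1 : ℝ) / 2) with hKdef
  set C : ℝ := (2 * Real.pi) ^ (-(1 : ℝ) / 2) with hCdef
  -- basic rewriting of the density
  have hgauss : ∀ x, gaussPDF c d x = K * Real.exp (-b * (x - c) ^ 2) := by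
    intro x
    rw [gaussPDF]
    rw [show -(x - c) ^ 2 / (2 * d) = -b * (x - c) ^ 2 from by rw [hbdef]; ring]
  -- relation between K and C
  have hKs : K = s⁻¹ * C := by
    rw [hKdef, hCdef, Real.mul_rpow (by positivity) hd.le]
    rw [mul_comm]
    congr 1
    rw [show (-(1:ℝ)/2) = -(1/2) by norm_num, Real.rpow_neg hd.le, ← Real.sqrt_eq_rpow]
  have hds : d * s⁻¹ = s := by
    rw [← hs2, sq, mul_assoc, mul_inv_cancel₀ hs0.ne', mul_one]
  -- value of the standard normal density at c/s
  have hphi : gaussPDF 0 1 (c / s) = C * Real.exp (-b * c ^ 2) := by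
    rw [gaussPDF, mul_one, mul_one, sub_zero, hCdef]
    rw [show -(c / s) ^ 2 / 2 = -b * c ^ 2 from by rw [div_pow, hs2, hbdef]; ring]
  -- integrability facts
  have Iexp : Integrable (fun x : ℝ => Real.exp (-b * (x - c) ^ 2)) :=
    (integrable_exp_neg_mul_sq hb).comp_sub_right c
  have Ix2 : Integrable (fun x : ℝ => x ^ 2 * Real.exp (-b * (x - c) ^ 2)) := by
    have h1 : Integrable (fun y : ℝ => (y + c) ^ 2 * Real.exp (-b * y ^ 2)) := by
      have := ((int_pow_gauss hb 2).add
        ((int_pow_gauss hb 1).const_mul (2 * c))).add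
        ((integrable_exp_neg_mul_sq hb).const_mul (c ^ 2))
      exact this.congr (Eventually.of_forall fun y => by
        simp only [Pi.add_apply]; ring)
    have := h1.comp_sub_right c
    exact this.congr (Eventually.of_forall fun x => by
      show (x - c + c) ^ 2 * _ = _
      rw [sub_add_cancel])
  have Ih : Integrable (fun x : ℝ => (x ^ 2 - (c ^ 2 + d)) * (K * Real.exp (-b * (x - c) ^ 2))) := by
    have := (Ix2.const_mul K).sub (Iexp.const_mul ((c ^ 2 + d) * K))
    exact this.congr (Eventually.of_forall fun x => by
      simp only [Pi.sub_apply]; ring)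
  -- the antiderivative
  have hF : ∀ x : ℝ, HasDerivAt (fun x => -d * (x + c) * (K * Real.exp (-b * (x - c) ^ 2)))
      ((x ^ 2 - (c ^ 2 + d)) * (K * Real.exp (-b * (x - c) ^ 2))) x := by
    intro x
    have h1 : HasDerivAt (fun x : ℝ => -b * (x - c) ^ 2)
        (-b * (2 * (x - c) ^ 1 * 1)) x :=
      (((hasDerivAt_id x).sub_const c).pow 2).const_mul (-b)
    have h2 := h1.exp
    have h3 := h2.const_mul K
    have h4 : HasDerivAt (fun x : ℝ => -d * (x + c)) (-d) x := by
      simpa using ((hasDerivAt_id x).add_const c).const_mul (-d)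
    have := h4.mul h3
    refine this.congr_deriv ?_
    rw [hbdef]
    field_simp
    ring
  -- limit of the antiderivative at +∞
  have hFten : Tendsto (fun x => -d * (x + c) * (K * Real.exp (-b * (x - c) ^ 2)))
      atTop (𝓝 0) := by
    have hhalf : Tendsto (fun x : ℝ => Real.exp (-(1/2 : ℝ) * x)) atTop (𝓝 0) := by
      have h := tendsto_exp_neg_atTop_nhds_zero.comp
        (tendsto_id.const_mul_atTop (by norm_num : (0:ℝ) < 1/2))
      exact h.congr fun x => by simp [Function.comp, neg_mul]
    have hx1 : Tendsto (fun y : ℝ => y * Real.exp (-b * y ^ 2)) atTop (𝓝 0) := by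
      have h := (rpow_mul_exp_neg_mul_sq_isLittleO_exp_neg hb 1).tendsto_zero_of_tendsto hhalf
      refine h.congr' ?_
      filter_upwards [eventually_gt_atTop (0:ℝ)] with y hy
      rw [Real.rpow_one]
    have hx0 : Tendsto (fun y : ℝ => Real.exp (-b * y ^ 2)) atTop (𝓝 0) := by
      have h := (rpow_mul_exp_neg_mul_sq_isLittleO_exp_neg hb 0).tendsto_zero_of_tendsto hhalf
      refine h.congr' ?_
      filter_upwards [eventually_gt_atTop (0:ℝ)] with y hy
      rw [Real.rpow_zero, one_mul]
    have hG : Tendsto (fun y : ℝ => -d * (y + 2 * c) * (K * Real.exp (-b * y ^ 2)))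
        atTop (𝓝 0) := by
      have h1 : Tendsto (fun y : ℝ => (-d * K) * (y * Real.exp (-b * y ^ 2))) atTop (𝓝 0) := by
        simpa using hx1.const_mul (-d * K)
      have h2 : Tendsto (fun y : ℝ => (-2 * c * d * K) * Real.exp (-b * y ^ 2)) atTop (𝓝 0) := by
        simpa using hx0.const_mul (-2 * c * d * K)
      have := h1.add h2
      rw [add_zero] at this
      exact this.congr (fun y => by ring)
    have hcomp : Tendsto (fun x : ℝ => x - c) atTop atTop :=
      tendsto_atTop_add_const_right atTop (-c) tendsto_id |>.congr
        (fun x => by simp only [id_eq]; ring)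
    have := hG.comp hcomp
    refine this.congr (fun x => ?_)
    simp only [Function.comp]
    ring_nf
  -- FTC on (0, ∞)
  have key : ∫ x in Ioi (0:ℝ), (x ^ 2 - (c ^ 2 + d)) * (K * Real.exp (-b * (x - c) ^ 2))
      = d * c * (K * Real.exp (-b * c ^ 2)) := by
    rw [integral_Ioi_of_hasDerivAt_of_tendsto' (fun x _ => hF x) Ih.integrableOn hFten]
    rw [show ((0:ℝ) - c) ^ 2 = c ^ 2 from by ring]
    ring
  -- the Gaussian integral over (0, ∞) equals the CDF value
  have cdf_eq : ∫ x in Ioi (0:ℝ), K * Real.exp (-b * (x - c) ^ 2) = stdNormalCDF (c / s) := by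
    have hsinv : (s⁻¹) ^ 2 = d⁻¹ := by rw [inv_pow, hs2]
    have hpt : ∀ x : ℝ, K * Real.exp (-b * (x - c) ^ 2)
        = s⁻¹ * gaussPDF 0 1 ((x - c) * s⁻¹) := by
      intro x
      rw [gaussPDF, mul_one, mul_one, sub_zero]
      rw [show -((x - c) * s⁻¹) ^ 2 / 2 = -b * (x - c) ^ 2 from by
        rw [mul_pow, hsinv, hbdef]; ring]
      rw [hKs]
      ring
    calc ∫ x in Ioi (0:ℝ), K * Real.exp (-b * (x - c) ^ 2)
        = ∫ x in Ioi (0:ℝ), s⁻¹ * gaussPDF 0 1 ((x - c) * s⁻¹) :=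
          setIntegral_congr_fun measurableSet_Ioi (fun x _ => hpt x)
      _ = s⁻¹ * ∫ x in Ioi (0:ℝ), gaussPDF 0 1 ((x - c) * s⁻¹) := integral_const_mul _ _
      _ = s⁻¹ * ∫ x in Ioi (0 - c : ℝ), gaussPDF 0 1 (x * s⁻¹) := by
          rw [integral_comp_sub_right_Ioi (fun x => gaussPDF 0 1 (x * s⁻¹)) 0 c]
      _ = s⁻¹ * ((s⁻¹)⁻¹ • ∫ x in Ioi ((0 - c) * s⁻¹), gaussPDF 0 1 x) := by
          rw [integral_comp_mul_right_Ioi (gaussPDF 0 1) _ (inv_pos.mpr hs0)]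
      _ = ∫ x in Ioi (-(c / s)), gaussPDF 0 1 x := by
          rw [inv_inv, smul_eq_mul, ← mul_assoc, inv_mul_cancel₀ hs0.ne', one_mul]
          congr 1
          rw [zero_sub, neg_mul, div_eq_mul_inv]
      _ = ∫ x in Iic (c / s), gaussPDF 0 1 x := by
          rw [← integral_comp_neg_Iic]
          refine setIntegral_congr_fun measurableSet_Iic (fun θ _ => ?_)
          rw [gaussPDF, gaussPDF, sub_zero, sub_zero, neg_sq]
      _ = stdNormalCDF (c / s) := rfl
  -- main computation
  have e1 : (fun x => gaussPDF c d x * (max 0 x) ^ 2)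
      = Set.indicator (Ioi (0:ℝ)) (fun x =>
          (x ^ 2 - (c ^ 2 + d)) * (K * Real.exp (-b * (x - c) ^ 2))
          + (c ^ 2 + d) * (K * Real.exp (-b * (x - c) ^ 2))) := by
    funext x
    by_cases hx : (0:ℝ) < x
    · rw [Set.indicator_of_mem (Set.mem_Ioi.mpr hx), hgauss x, max_eq_right hx.le]
      ring
    · rw [Set.indicator_of_notMem (fun h => hx (Set.mem_Ioi.mp h))]
      push_neg at hx
      rw [max_eq_left hx]
      simp
  rw [e1, integral_indicator measurableSet_Ioi,
    integral_add Ih.integrableOn ((Iexp.const_mul K).const_mul (c ^ 2 + d)).integrableOn,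
    key, integral_const_mul, cdf_eq, hphi]
  rw [hKs]
  rw [show d * c * (s⁻¹ * C * Real.exp (-b * c ^ 2))
      = (d * s⁻¹) * (c * (C * Real.exp (-b * c ^ 2))) from by ring, hds]
  ring
end
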